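/- Let G be a graph containing a subgraph H on k vertices such that H is a disjoint union of regular graphs, each of positive degree. Then E(G) ≥ k. -/

import Mathlib

open Finset Matrix

noncomputable section

variable {V : Type*} [Fintype V] [DecidableEq V]

/-- The adjacency matrix of a simple graph is Hermitian (over ℝ). -/
theorem SimpleGraph.isHermitian_adjMatrix' (G : SimpleGraph V) [DecidableRel G.Adj] :
    (G.adjMatrix ℝ).IsHermitian := by
  rw [Matrix.IsHermitian, Matrix.conjTranspose_eq_transpose_of_trivial]
  exact G.isSymm_adjMatrix

/-- The energy of a graph: the sum of the absolute values of the
eigenvalues of its adjacency matrix. -/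
def SimpleGraph.energy (G : SimpleGraph V) [DecidableRel G.Adj] : ℝ :=
  ∑ k, |G.isHermitian_adjMatrix'.eigenvalues k|

/-- The Randić index of a graph: the sum over the (unordered) edges `(i,j)`
of `1/√(deg i · deg j)`. -/
def SimpleGraph.randic (G : SimpleGraph V) [DecidableRel G.Adj] : ℝ :=
  ∑ e ∈ G.edgeFinset,
    Sym2.lift ⟨fun i j => 1 / Real.sqrt (G.degree i * G.degree j),
      fun i j => by simp [mul_comm]⟩ e

end

/-- quadratic form bound for the normalized adjacency matrix -/
lemma quad_bound {V : Type*} [Fintype V] [DecidableEq V]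
    (H : SimpleGraph V) [DecidableRel H.Adj] (u : V → ℝ) :
    |∑ i, ∑ j, u i * (if H.Adj i j then
        1 / Real.sqrt ((H.degree i : ℝ) * (H.degree j : ℝ)) else 0) * u j|
      ≤ ∑ i, (u i) ^ 2 := by
  have key : ∀ i j : V,
      |u i * (if H.Adj i j then
        1 / Real.sqrt ((H.degree i : ℝ) * (H.degree j : ℝ)) else 0) * u j|
      ≤ (if H.Adj i j then
          (u i) ^ 2 / (H.degree i : ℝ) / 2 + (u j) ^ 2 / (H.degree j : ℝ) / 2 else 0) := by
    intro i j
    by_cases h : H.Adj i j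
    · simp only [h, if_true]
      have hdi : (1 : ℝ) ≤ (H.degree i : ℝ) := by
        exact_mod_cast (H.degree_pos_iff_exists_adj i).mpr ⟨j, h⟩
      have hdj : (1 : ℝ) ≤ (H.degree j : ℝ) := by
        exact_mod_cast (H.degree_pos_iff_exists_adj j).mpr ⟨i, h.symm⟩
      have hsi : (0 : ℝ) < Real.sqrt (H.degree i : ℝ) := Real.sqrt_pos.mpr (by linarith)
      have hsj : (0 : ℝ) < Real.sqrt (H.degree j : ℝ) := Real.sqrt_pos.mpr (by linarith)
      have hsqi : Real.sqrt (H.degree i : ℝ) ^ 2 = (H.degree i : ℝ) :=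
        Real.sq_sqrt (by linarith)
      have hsqj : Real.sqrt (H.degree j : ℝ) ^ 2 = (H.degree j : ℝ) :=
        Real.sq_sqrt (by linarith)
      have hmul : Real.sqrt ((H.degree i : ℝ) * (H.degree j : ℝ))
          = Real.sqrt (H.degree i : ℝ) * Real.sqrt (H.degree j : ℝ) :=
        Real.sqrt_mul (by linarith) _
      set a := |u i| / Real.sqrt (H.degree i : ℝ) with ha
      set b := |u j| / Real.sqrt (H.degree j : ℝ) with hb
      have hab : a * b ≤ (a ^ 2 + b ^ 2) / 2 := by nlinarith [sq_nonneg (a - b)]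
      have hL : |u i * (1 / Real.sqrt ((H.degree i : ℝ) * (H.degree j : ℝ))) * u j|
          = a * b := by
        rw [abs_mul, abs_mul, abs_of_nonneg (by positivity :
          (0:ℝ) ≤ 1 / Real.sqrt ((H.degree i : ℝ) * (H.degree j : ℝ))), hmul, ha, hb]
        field_simp
      have ha2 : a ^ 2 = (u i) ^ 2 / (H.degree i : ℝ) := by
        rw [ha, div_pow, sq_abs, hsqi]
      have hb2 : b ^ 2 = (u j) ^ 2 / (H.degree j : ℝ) := by
        rw [hb, div_pow, sq_abs, hsqj]
      rw [hL]
      calc a * b ≤ (a ^ 2 + b ^ 2) / 2 := hab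
        _ = (u i) ^ 2 / (H.degree i : ℝ) / 2 + (u j) ^ 2 / (H.degree j : ℝ) / 2 := by
            rw [ha2, hb2]; ring
    · simp [h]
  have habs : |∑ i, ∑ j, u i * (if H.Adj i j then
      1 / Real.sqrt ((H.degree i : ℝ) * (H.degree j : ℝ)) else 0) * u j|
      ≤ ∑ i, ∑ j, (if H.Adj i j then
          (u i) ^ 2 / (H.degree i : ℝ) / 2 + (u j) ^ 2 / (H.degree j : ℝ) / 2 else 0) := by
    calc |∑ i, ∑ j, u i * _ * u j| ≤ ∑ i, |∑ j, u i * _ * u j| :=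
          Finset.abs_sum_le_sum_abs _ _
      _ ≤ ∑ i, ∑ j, |u i * _ * u j| :=
          Finset.sum_le_sum fun i _ => Finset.abs_sum_le_sum_abs _ _
      _ ≤ _ := Finset.sum_le_sum fun i _ => Finset.sum_le_sum fun j _ => key i j
  refine habs.trans ?_
  have hsplit : ∀ i j : V, (if H.Adj i j then
      (u i) ^ 2 / (H.degree i : ℝ) / 2 + (u j) ^ 2 / (H.degree j : ℝ) / 2 else 0)
      = (if H.Adj i j then (u i) ^ 2 / (H.degree i : ℝ) / 2 else 0)
        + (if H.Adj i j then (u j) ^ 2 / (H.degree j : ℝ) / 2 else 0) := by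
    intro i j; split <;> simp
  have hrow : ∀ i : V, ∀ c : ℝ, (∑ j, if H.Adj i j then c else 0) = (H.degree i : ℝ) * c := by
    intro i c
    rw [Finset.sum_ite, Finset.sum_const, Finset.sum_const_zero, add_zero, nsmul_eq_mul]
    congr 1
    norm_cast
    rw [← SimpleGraph.neighborFinset_eq_filter]
    rfl
  have hone : ∀ i : V, (H.degree i : ℝ) * ((u i) ^ 2 / (H.degree i : ℝ) / 2) ≤ (u i) ^ 2 / 2 := by
    intro i
    rcases Nat.eq_zero_or_pos (H.degree i) with hd | hd
    · rw [hd]; simp; positivity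
    · have hne : (H.degree i : ℝ) ≠ 0 := by positivity
      have : (H.degree i : ℝ) * ((u i) ^ 2 / (H.degree i : ℝ) / 2) = (u i) ^ 2 / 2 := by
        field_simp
        try ring
      rw [this]
  calc ∑ i, ∑ j, (if H.Adj i j then
        (u i) ^ 2 / (H.degree i : ℝ) / 2 + (u j) ^ 2 / (H.degree j : ℝ) / 2 else 0)
      = (∑ i, ∑ j, (if H.Adj i j then (u i) ^ 2 / (H.degree i : ℝ) / 2 else 0))
        + (∑ i, ∑ j, (if H.Adj i j then (u j) ^ 2 / (H.degree j : ℝ) / 2 else 0)) := by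
        rw [← Finset.sum_add_distrib]
        refine Finset.sum_congr rfl fun i _ => ?_
        rw [← Finset.sum_add_distrib]
        exact Finset.sum_congr rfl fun j _ => hsplit i j
    _ ≤ (∑ i, (u i) ^ 2 / 2) + (∑ i, (u i) ^ 2 / 2) := by
        refine add_le_add ?_ ?_
        · refine Finset.sum_le_sum fun i _ => ?_
          rw [hrow i]; exact hone i
        · rw [Finset.sum_comm]
          refine Finset.sum_le_sum fun j _ => ?_
          have : ∀ i : V, (if H.Adj i j then (u j) ^ 2 / (H.degree j : ℝ) / 2 else 0)
              = (if H.Adj j i then (u j) ^ 2 / (H.degree j : ℝ) / 2 else 0) := by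
            intro i; exact if_congr (H.adj_comm i j) rfl rfl
          calc (∑ i, if H.Adj i j then (u j) ^ 2 / (H.degree j : ℝ) / 2 else 0)
              = ∑ i, (if H.Adj j i then (u j) ^ 2 / (H.degree j : ℝ) / 2 else 0) :=
                Finset.sum_congr rfl fun i _ => this i
            _ = (H.degree j : ℝ) * ((u j) ^ 2 / (H.degree j : ℝ) / 2) := hrow j _
            _ ≤ (u j) ^ 2 / 2 := hone j
    _ = ∑ i, (u i) ^ 2 := by rw [← Finset.sum_add_distrib]; ring_nf

/-- trace duality bound -/
lemma trace_bound {V : Type*} [Fintype V] [DecidableEq V]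
    (A : Matrix V V ℝ) (hA : A.IsHermitian) (B : Matrix V V ℝ)
    (hB : ∀ u : V → ℝ, |∑ i, ∑ j, u i * B i j * u j| ≤ ∑ i, (u i) ^ 2) :
    (A * B).trace ≤ ∑ k, |hA.eigenvalues k| := by
  set Uc : Matrix V V ℝ := (hA.eigenvectorUnitary : Matrix V V ℝ) with hUc
  have hunit : star Uc * Uc = 1 := Matrix.mem_unitaryGroup_iff'.mp hA.eigenvectorUnitary.2
  have hdiag : (RCLike.ofReal ∘ hA.eigenvalues : V → ℝ) = hA.eigenvalues := by
    funext k; simp [RCLike.ofReal_real_eq_id]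
  have key : (A * B).trace = ∑ k, hA.eigenvalues k * ((star Uc * B * Uc) k k) := by
    conv_lhs => rw [hA.spectral_theorem, Unitary.conjStarAlgAut_apply]
    rw [mul_assoc (Uc * _) (star Uc) B, Matrix.trace_mul_comm,
      ← mul_assoc, hdiag]
    simp only [Matrix.trace, Matrix.diag, Matrix.mul_diagonal]
    exact Finset.sum_congr rfl fun k _ => mul_comm _ _
  have hc : ∀ k, |(star Uc * B * Uc) k k| ≤ 1 := by
    intro k
    have h1 : (star Uc * B * Uc) k k = ∑ i, ∑ j, Uc i k * B i j * Uc j k := by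
      simp only [Matrix.mul_apply, Matrix.star_apply, star_trivial, Finset.sum_mul]
      exact Finset.sum_comm
    have h2 : ∑ i, (Uc i k) ^ 2 = 1 := by
      have h3 := congrFun (congrFun hunit k) k
      simp only [Matrix.mul_apply, Matrix.star_apply, star_trivial, Matrix.one_apply_eq] at h3
      rw [← h3]
      exact Finset.sum_congr rfl fun i _ => (sq (Uc i k)).symm ▸ rfl
    rw [h1]
    exact (hB fun i => Uc i k).trans_eq h2
  rw [key]
  refine Finset.sum_le_sum fun k _ => ?_
  calc hA.eigenvalues k * ((star Uc * B * Uc) k k)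
      ≤ |hA.eigenvalues k * ((star Uc * B * Uc) k k)| := le_abs_self _
    _ = |hA.eigenvalues k| * |(star Uc * B * Uc) k k| := abs_mul _ _
    _ ≤ |hA.eigenvalues k| * 1 := by
        exact mul_le_mul_of_nonneg_left (hc k) (abs_nonneg _)
    _ = |hA.eigenvalues k| := mul_one _

/-- If `G` contains a subgraph `H` on `k` vertices (the set `S`) that is a disjoint
union of regular graphs each of positive degree (i.e. every vertex of `S` has positive
degree in `H`, vertices outside `S` are isolated in `H`, and degrees in `H` are
constant on connected components of `H`), then `E(G) ≥ k`. -/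
theorem stmt6 {V : Type*} [Fintype V] [DecidableEq V]
    (G H : SimpleGraph V) [DecidableRel G.Adj] [DecidableRel H.Adj]
    (hHG : H ≤ G) (S : Finset V) (k : ℕ) (hk : S.card = k)
    (hpos : ∀ i ∈ S, 0 < H.degree i)
    (hiso : ∀ i ∉ S, H.degree i = 0)
    (hreg : ∀ i j : V, H.Reachable i j → H.degree i = H.degree j) :
    (k : ℝ) ≤ G.energy := by
  classical
  set B : Matrix V V ℝ := fun i j => if H.Adj i j then
      1 / Real.sqrt ((H.degree i : ℝ) * (H.degree j : ℝ)) else 0 with hBdef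
  set A : Matrix V V ℝ := G.adjMatrix ℝ with hAdef
  have hA : A.IsHermitian := G.isHermitian_adjMatrix'
  have hupper : (A * B).trace ≤ G.energy :=
    trace_bound A hA B (fun u => quad_bound H u)
  have hBnonneg : ∀ i j, 0 ≤ B i j := by
    intro i j
    show (0:ℝ) ≤ if H.Adj i j then 1 / Real.sqrt ((H.degree i : ℝ) * (H.degree j : ℝ)) else 0
    split
    · positivity
    · exact le_refl 0
  have htr : (A * B).trace = ∑ i, ∑ j, A i j * B j i := by
    simp [Matrix.trace, Matrix.diag, Matrix.mul_apply]
  have step1 : ∀ i j : V, (if H.Adj i j then B j i else 0) ≤ A i j * B j i := by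
    intro i j
    by_cases h : H.Adj i j
    · have hg : G.Adj i j := hHG h
      rw [if_pos h, hAdef]
      simp [SimpleGraph.adjMatrix_apply, hg]
    · rw [if_neg h]
      refine mul_nonneg ?_ (hBnonneg j i)
      rw [hAdef]; simp [SimpleGraph.adjMatrix_apply]
      split <;> norm_num
  have inner_eq : ∀ i : V, (∑ j, if H.Adj i j then B j i else 0)
      = if i ∈ S then (1:ℝ) else 0 := by
    intro i
    have hterm : ∀ j : V, (if H.Adj i j then B j i else 0)
        = if H.Adj i j then ((H.degree i : ℝ))⁻¹ else 0 := by
      intro j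
      by_cases h : H.Adj i j
      · rw [if_pos h, if_pos h]
        have hd : H.degree j = H.degree i := hreg j i h.symm.reachable
        show (if H.Adj j i then 1 / Real.sqrt ((H.degree j : ℝ) * (H.degree i : ℝ)) else 0) = _
        rw [if_pos h.symm, hd, Real.sqrt_mul_self (by positivity), one_div]
      · rw [if_neg h, if_neg h]
    rw [Finset.sum_congr rfl fun j _ => hterm j]
    rw [Finset.sum_ite, Finset.sum_const, Finset.sum_const_zero, add_zero, nsmul_eq_mul]
    have hcard : ((Finset.univ.filter (fun j => H.Adj i j)).card : ℝ) = (H.degree i : ℝ) := by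
      norm_cast
      rw [← SimpleGraph.neighborFinset_eq_filter]
      rfl
    rw [hcard]
    by_cases hi : i ∈ S
    · rw [if_pos hi]
      have hd : (H.degree i : ℝ) ≠ 0 := by
        have := hpos i hi; positivity
      field_simp
    · rw [if_neg hi, hiso i hi]
      simp
  have hlow : (k : ℝ) ≤ (A * B).trace := by
    rw [htr]
    calc (k : ℝ) = ∑ i, (if i ∈ S then (1:ℝ) else 0) := by
          rw [Finset.sum_ite_mem, Finset.univ_inter, Finset.sum_const, hk, nsmul_eq_mul, mul_one]
      _ = ∑ i, ∑ j, (if H.Adj i j then B j i else 0) :=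
          Finset.sum_congr rfl fun i _ => (inner_eq i).symm
      _ ≤ ∑ i, ∑ j, A i j * B j i :=
          Finset.sum_le_sum fun i _ => Finset.sum_le_sum fun j _ => step1 i j
  exact hlow.trans hupper
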